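/- Let q ∈ (0, 2], let T be an infinite tree in which every vertex has finite degree, and let S be a nonempty finite vertex subset of T with S ∩ A_q = ∅. Then (q + 2) times the number of edges of T joining a vertex of S to a vertex of T ∖ (S ∪ A_q) is at least q times the sum of the degrees in T of the vertices of S; in other words, the q-oceans T ∖ A_q satisfy the isoperimetric inequality |∂^{T∖A_q} S| ≥ (q/(q+2)) · Σ_{x∈S} deg_T(x), where ∂^{T∖A_q} S denotes the set of edges of T from S to T ∖ (S ∪ A_q). -/

import Mathlib

open SimpleGraph

variable {V : Type*}

/-- The edge boundary `∂S` of a vertex set `S`: the set of edges of `G` with one endpoint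
in `S` and the other endpoint outside `S`. -/
def edgeBdry (G : SimpleGraph V) (S : Set V) : Set (Sym2 V) :=
  {e | e ∈ G.edgeSet ∧ ∃ x ∈ S, ∃ y ∉ S, e = s(x, y)}

/-- The `q`-isolation `Δ_q S := q·|S| − |∂S|` of a vertex set `S`. -/
noncomputable def isolation (G : SimpleGraph V) (q : ℝ) (S : Set V) : ℝ :=
  q * (S.ncard : ℝ) - ((edgeBdry G S).ncard : ℝ)

/-- A finite vertex set `S` is a `q`-isolated core if `Δ_q S > Δ_q A` for every
proper subset `A ⊊ S`. -/
def IsIsolatedCore (G : SimpleGraph V) (q : ℝ) (S : Set V) : Prop :=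
  S.Finite ∧ ∀ A : Set V, A ⊂ S → isolation G q A < isolation G q S

/-- `A_q`: the union of all `q`-isolated cores of `G`. -/
def coreUnion (G : SimpleGraph V) (q : ℝ) : Set V :=
  ⋃₀ {S : Set V | IsIsolatedCore G q S}

/-- A `q`-island: a connected component of (the subgraph of `G` induced by) `A_q`,
characterised as a nonempty connected subset of `A_q` which is closed under
adjacency within `A_q`. -/
def IsIsland (G : SimpleGraph V) (q : ℝ) (C : Set V) : Prop :=
  C ⊆ coreUnion G q ∧ (G.induce C).Connected ∧
    ∀ x ∈ C, ∀ y ∈ coreUnion G q, G.Adj x y → y ∈ C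

/-- The anchored expansion constant
`i(G) = lim_{n→∞} inf { |∂K|/|K| : o ∈ K ⊆ G connected, n ≤ |K| < ∞ }`;
since the infima are nondecreasing in `n`, the limit equals the supremum over `n`. -/
noncomputable def anchoredExpansion (G : SimpleGraph V) (o : V) : ℝ :=
  ⨆ n : ℕ, sInf {r : ℝ | ∃ K : Set V, o ∈ K ∧ K.Finite ∧ (G.induce K).Connected ∧
    n ≤ K.ncard ∧ r = ((edgeBdry G K).ncard : ℝ) / (K.ncard : ℝ)}

/-- The set of children of a vertex `x` in the tree rooted at `o`: the neighbours of `x`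
at larger graph distance from the root. -/
def children (G : SimpleGraph V) (o x : V) : Set V :=
  {y | G.Adj x y ∧ G.dist o y = G.dist o x + 1}

section AuxIso
variable {G : SimpleGraph V}

def edgesBetween (G : SimpleGraph V) (A B : Set V) : Set (Sym2 V) :=
  {e | e ∈ G.edgeSet ∧ ∃ x ∈ A, ∃ y ∈ B, e = s(x, y)}

variable {G : SimpleGraph V}

lemma edgeBdry_eq_edgesBetween (S : Set V) : edgeBdry G S = edgesBetween G S Sᶜ := rfl

lemma edgeSet_exists_rep {e : Sym2 V} (he : e ∈ G.edgeSet) :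
    ∃ u v, G.Adj u v ∧ e = s(u, v) := by
  induction e using Sym2.ind with
  | _ u v => exact ⟨u, v, he, rfl⟩

lemma mem_edgeBdry_iff {u v : V} (h : G.Adj u v) {S : Set V} :
    s(u, v) ∈ edgeBdry G S ↔ ((u ∈ S ∧ v ∉ S) ∨ (v ∈ S ∧ u ∉ S)) := by
  constructor
  · rintro ⟨-, x, hx, y, hy, hxy⟩
    rw [Sym2.eq_iff] at hxy
    rcases hxy with ⟨rfl, rfl⟩ | ⟨rfl, rfl⟩
    · exact .inl ⟨hx, hy⟩
    · exact .inr ⟨hx, hy⟩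
  · rintro (⟨h1, h2⟩ | ⟨h1, h2⟩)
    · exact ⟨h, u, h1, v, h2, rfl⟩
    · exact ⟨h, v, h1, u, h2, Sym2.eq_swap⟩

lemma mem_edgesBetween_iff {u v : V} (h : G.Adj u v) {A B : Set V} :
    s(u, v) ∈ edgesBetween G A B ↔ ((u ∈ A ∧ v ∈ B) ∨ (v ∈ A ∧ u ∈ B)) := by
  constructor
  · rintro ⟨-, x, hx, y, hy, hxy⟩
    rw [Sym2.eq_iff] at hxy
    rcases hxy with ⟨rfl, rfl⟩ | ⟨rfl, rfl⟩
    · exact .inl ⟨hx, hy⟩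
    · exact .inr ⟨hx, hy⟩
  · rintro (⟨h1, h2⟩ | ⟨h1, h2⟩)
    · exact ⟨h, u, h1, v, h2, rfl⟩
    · exact ⟨h, v, h1, u, h2, Sym2.eq_swap⟩

lemma edgesBetween_subset_edgeSet {A B : Set V} : edgesBetween G A B ⊆ G.edgeSet :=
  fun _ he => he.1

lemma edgesBetween_finite (hloc : ∀ v : V, (G.neighborSet v).Finite) {A : Set V}
    (hA : A.Finite) (B : Set V) : (edgesBetween G A B).Finite := by
  apply Set.Finite.subset (hA.biUnion (fun x _ => ((hloc x).image (fun y => s(x, y)))))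
  rintro e ⟨he, x, hx, y, hy, rfl⟩
  exact Set.mem_biUnion hx ⟨y, he, rfl⟩

lemma edgeBdry_finite (hloc : ∀ v : V, (G.neighborSet v).Finite) {A : Set V}
    (hA : A.Finite) : (edgeBdry G A).Finite := by
  rw [edgeBdry_eq_edgesBetween]; exact edgesBetween_finite hloc hA _

open Classical in
lemma card_eq_sum_ind {α : Type*} (F : Finset α) (X : Set α) (hX : X.Finite)
    (hsub : hX.toFinset ⊆ F) :
    X.ncard = ∑ e ∈ F, (if e ∈ X then 1 else 0) := by
  rw [Set.ncard_eq_toFinset_card _ hX, ← Finset.card_filter]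
  congr 1
  ext e
  simp only [Finset.mem_filter, Set.Finite.mem_toFinset]
  exact ⟨fun h => ⟨hsub (hX.mem_toFinset.mpr h), h⟩, fun h => h.2⟩

open Classical in
lemma bdry_submodular (hloc : ∀ v : V, (G.neighborSet v).Finite) {A B : Set V}
    (hA : A.Finite) (hB : B.Finite) :
    (edgeBdry G (A ∪ B)).ncard + (edgeBdry G (A ∩ B)).ncard ≤
      (edgeBdry G A).ncard + (edgeBdry G B).ncard := by
  have fA := edgeBdry_finite hloc hA
  have fB := edgeBdry_finite hloc hB
  have fU := edgeBdry_finite hloc (hA.union hB)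
  have fI := edgeBdry_finite hloc (hA.inter_of_left B)
  set F : Finset (Sym2 V) := fA.toFinset ∪ fB.toFinset ∪ fU.toFinset ∪ fI.toFinset with hF
  have sA : fA.toFinset ⊆ F :=
    ((Finset.subset_union_left.trans Finset.subset_union_left).trans Finset.subset_union_left)
  have sB : fB.toFinset ⊆ F :=
    ((Finset.subset_union_right.trans Finset.subset_union_left).trans Finset.subset_union_left)
  have sU : fU.toFinset ⊆ F := (Finset.subset_union_right.trans Finset.subset_union_left)
  have sI : fI.toFinset ⊆ F := Finset.subset_union_right
  rw [card_eq_sum_ind F _ fA sA, card_eq_sum_ind F _ fB sB,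
    card_eq_sum_ind F _ fU sU, card_eq_sum_ind F _ fI sI,
    ← Finset.sum_add_distrib, ← Finset.sum_add_distrib]
  apply Finset.sum_le_sum
  intro e heF
  have heE : e ∈ G.edgeSet := by
    have : e ∈ fA.toFinset ∪ fB.toFinset ∪ fU.toFinset ∪ fI.toFinset := heF
    simp only [Finset.mem_union, Set.Finite.mem_toFinset] at this
    rcases this with ((h | h) | h) | h <;> exact h.1
  obtain ⟨u, v, huv, rfl⟩ := edgeSet_exists_rep heE
  by_cases hau : u ∈ A <;> by_cases hbu : u ∈ B <;> by_cases hav : v ∈ A <;> by_cases hbv : v ∈ B <;>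
    simp [mem_edgeBdry_iff huv, Set.mem_union, Set.mem_inter_iff, hau, hbu, hav, hbv]

open Classical in
lemma bdry_disjoint_union (hloc : ∀ v : V, (G.neighborSet v).Finite) {A S : Set V}
    (hA : A.Finite) (hS : S.Finite) (hd : ∀ x, x ∈ A → x ∉ S) :
    (edgeBdry G (A ∪ S)).ncard + 2 * (edgesBetween G A S).ncard ≤
      (edgeBdry G A).ncard + (edgeBdry G S).ncard := by
  have fA := edgeBdry_finite hloc hA
  have fS := edgeBdry_finite hloc hS
  have fU := edgeBdry_finite hloc (hA.union hS)
  have fE := edgesBetween_finite hloc hA S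
  set F : Finset (Sym2 V) := fA.toFinset ∪ fS.toFinset ∪ fU.toFinset ∪ fE.toFinset with hF
  have sA : fA.toFinset ⊆ F :=
    ((Finset.subset_union_left.trans Finset.subset_union_left).trans Finset.subset_union_left)
  have sS : fS.toFinset ⊆ F :=
    ((Finset.subset_union_right.trans Finset.subset_union_left).trans Finset.subset_union_left)
  have sU : fU.toFinset ⊆ F := (Finset.subset_union_right.trans Finset.subset_union_left)
  have sE : fE.toFinset ⊆ F := Finset.subset_union_right
  rw [card_eq_sum_ind F _ fA sA, card_eq_sum_ind F _ fS sS,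
    card_eq_sum_ind F _ fU sU, card_eq_sum_ind F _ fE sE,
    Finset.mul_sum, ← Finset.sum_add_distrib, ← Finset.sum_add_distrib]
  apply Finset.sum_le_sum
  intro e heF
  have heE : e ∈ G.edgeSet := by
    have : e ∈ fA.toFinset ∪ fS.toFinset ∪ fU.toFinset ∪ fE.toFinset := heF
    simp only [Finset.mem_union, Set.Finite.mem_toFinset] at this
    rcases this with ((h | h) | h) | h <;> exact h.1
  obtain ⟨u, v, huv, rfl⟩ := edgeSet_exists_rep heE
  have hdu := hd u
  have hdv := hd v
  by_cases hau : u ∈ A <;> by_cases hsu : u ∈ S <;> by_cases hav : v ∈ A <;> by_cases hsv : v ∈ S <;>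
    simp [mem_edgeBdry_iff huv, mem_edgesBetween_iff huv, Set.mem_union, hau, hsu, hav, hsv] <;>
    tauto

variable {q : ℝ}

lemma isolation_supermodular (hloc : ∀ v : V, (G.neighborSet v).Finite) {A B : Set V}
    (hA : A.Finite) (hB : B.Finite) :
    isolation G q A + isolation G q B ≤ isolation G q (A ∪ B) + isolation G q (A ∩ B) := by
  have hcard : (A ∪ B).ncard + (A ∩ B).ncard = A.ncard + B.ncard :=
    Set.ncard_union_add_ncard_inter A B hA hB
  have hbd := bdry_submodular hloc hA hB
  unfold isolation
  have hc : ((A ∪ B).ncard : ℝ) + ((A ∩ B).ncard : ℝ) = (A.ncard : ℝ) + (B.ncard : ℝ) := by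
    exact_mod_cast congrArg (Nat.cast : ℕ → ℝ) hcard
  have hb : ((edgeBdry G (A ∪ B)).ncard : ℝ) + ((edgeBdry G (A ∩ B)).ncard : ℝ) ≤
      ((edgeBdry G A).ncard : ℝ) + ((edgeBdry G B).ncard : ℝ) := by exact_mod_cast hbd
  have hcq : q * (((A ∪ B).ncard : ℝ) + ((A ∩ B).ncard : ℝ)) =
      q * ((A.ncard : ℝ) + (B.ncard : ℝ)) := by rw [hc]
  linarith [hcq, hb]

lemma isolation_le_union_core (hloc : ∀ v : V, (G.neighborSet v).Finite) {A X : Set V}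
    (hA : A.Finite) (hX : IsIsolatedCore G q X) :
    isolation G q A ≤ isolation G q (A ∪ X) := by
  by_cases hsub : X ⊆ A
  · rw [Set.union_eq_self_of_subset_right hsub]
  · have hss : A ∩ X ⊂ X := by
      refine ⟨Set.inter_subset_right, fun hc => hsub (fun x hx => (hc hx).1)⟩
    have h2 := hX.2 _ hss
    have h3 := isolation_supermodular (q := q) hloc hA hX.1
    linarith

lemma core_subset_coreUnion {X : Set V} (hX : IsIsolatedCore G q X) : X ⊆ coreUnion G q :=
  fun x hx => ⟨X, hX, hx⟩

lemma isolation_empty : isolation G q (∅ : Set V) = 0 := by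
  have : edgeBdry G (∅ : Set V) = ∅ := by
    ext e; simp [edgeBdry]
  simp [isolation, this]

lemma exists_core_maximizer (hloc : ∀ v : V, (G.neighborSet v).Finite) {W : Set V}
    (hW : W.Finite) :
    ∃ A, A ⊆ W ∧ IsIsolatedCore G q A ∧ ∀ B, B ⊆ W → isolation G q B ≤ isolation G q A := by
  classical
  obtain ⟨A₀, hA₀W, hA₀max⟩ :=
    Set.exists_max_image {A : Set V | A ⊆ W} (isolation G q) hW.finite_subsets
      ⟨∅, by simp⟩
  set M : Set (Set V) := {A | A ⊆ W ∧ isolation G q A = isolation G q A₀} with hM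
  have hne : (Set.ncard '' M).Nonempty := ⟨A₀.ncard, A₀, ⟨hA₀W, rfl⟩, rfl⟩
  obtain ⟨A, hAM, hAcard⟩ := Nat.sInf_mem hne
  refine ⟨A, hAM.1, ⟨hW.subset hAM.1, ?_⟩, fun B hB => (hA₀max B hB).trans_eq hAM.2.symm⟩
  intro B hBA
  have hBW : B ⊆ W := hBA.subset.trans hAM.1
  refine lt_of_le_of_ne ((hA₀max B hBW).trans_eq hAM.2.symm) (fun heq => ?_)
  have hBM : B ∈ M := ⟨hBW, heq.trans hAM.2⟩
  have h1 : sInf (Set.ncard '' M) ≤ B.ncard := Nat.sInf_le ⟨B, hBM, rfl⟩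
  have h2 : B.ncard < A.ncard := Set.ncard_lt_ncard hBA (hW.subset hAM.1)
  omega

lemma isolation_le_union_cores (hloc : ∀ v : V, (G.neighborSet v).Finite) {A : Set V}
    (hA : A.Finite) {ι : Type*} [DecidableEq ι] (N : Finset ι) (X : ι → Set V)
    (hX : ∀ i ∈ N, IsIsolatedCore G q (X i)) :
    (A ∪ ⋃ i ∈ N, X i).Finite ∧
      isolation G q A ≤ isolation G q (A ∪ ⋃ i ∈ N, X i) := by
  classical
  induction N using Finset.induction with
  | empty => simpa using hA
  | @insert a s ha ih =>
    have hXa : IsIsolatedCore G q (X a) := hX a (Finset.mem_insert_self a s)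
    have ihs := ih (fun i hi => hX i (Finset.mem_insert_of_mem hi))
    have hrw : (A ∪ ⋃ i ∈ insert a s, X i) = (A ∪ ⋃ i ∈ s, X i) ∪ X a := by
      rw [Finset.set_biUnion_insert, ← Set.union_assoc, Set.union_right_comm]
    rw [hrw]
    refine ⟨ihs.1.union hXa.1, le_trans ihs.2 ?_⟩
    exact isolation_le_union_core hloc ihs.1 hXa

open Classical in
lemma sum_degree_le (hloc : ∀ v : V, (G.neighborSet v).Finite) {S : Set V} (hS : S.Finite) :
    ∑ x ∈ hS.toFinset, (G.neighborSet x).ncard ≤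
      2 * (edgesBetween G S S).ncard + (edgeBdry G S).ncard := by
  have fE := edgesBetween_finite hloc hS S
  have fB := edgeBdry_finite hloc hS
  -- finsets of edges from x to neighbors inside / outside S
  set Bi : V → Finset (Sym2 V) :=
    fun x => (((hloc x).inter_of_left S).toFinset.image (fun y => s(x, y))) with hBi
  set Bo : V → Finset (Sym2 V) :=
    fun x => (((hloc x).diff (t := S)).toFinset.image (fun y => s(x, y))) with hBo
  have hinj : ∀ x : V, ∀ y ∈ G.neighborSet x, ∀ y' ∈ G.neighborSet x,
      s(x, y) = s(x, y') → y = y' := by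
    intro x y hy y' hy' h
    rw [Sym2.eq_iff] at h
    rcases h with ⟨-, h⟩ | ⟨h1, -⟩
    · exact h
    · exact absurd h1 (G.ne_of_adj hy')
  have cardBi : ∀ x, (Bi x).card = (G.neighborSet x ∩ S).ncard := by
    intro x
    rw [hBi, Finset.card_image_of_injOn, Set.ncard_eq_toFinset_card _ ((hloc x).inter_of_left S)]
    intro y hy y' hy' h
    simp only [Finset.mem_coe, Set.Finite.mem_toFinset, Set.mem_inter_iff] at hy hy'
    exact hinj x y hy.1 y' hy'.1 h
  have cardBo : ∀ x, (Bo x).card = (G.neighborSet x \ S).ncard := by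
    intro x
    rw [hBo, Finset.card_image_of_injOn, Set.ncard_eq_toFinset_card _ ((hloc x).diff (t := S))]
    intro y hy y' hy' h
    simp only [Finset.mem_coe, Set.Finite.mem_toFinset, Set.mem_diff] at hy hy'
    exact hinj x y hy.1 y' hy'.1 h
  have hsplit : ∀ x, (G.neighborSet x).ncard
      = (G.neighborSet x ∩ S).ncard + (G.neighborSet x \ S).ncard :=
    fun x => (Set.ncard_inter_add_ncard_diff_eq_ncard _ _ (hloc x)).symm
  calc ∑ x ∈ hS.toFinset, (G.neighborSet x).ncard
      = ∑ x ∈ hS.toFinset, ((Bi x).card + (Bo x).card) := by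
        refine Finset.sum_congr rfl (fun x _ => ?_)
        rw [cardBi, cardBo, hsplit]
    _ = (∑ x ∈ hS.toFinset, (Bi x).card) + ∑ x ∈ hS.toFinset, (Bo x).card :=
        Finset.sum_add_distrib
    _ ≤ 2 * (edgesBetween G S S).ncard + (edgeBdry G S).ncard := by
        gcongr
        · -- inner edges counted at most twice
          have hBiE : ∀ x ∈ hS.toFinset, Bi x ⊆ fE.toFinset := by
            intro x hx e he
            rw [hBi] at he
            obtain ⟨y, hy, rfl⟩ := Finset.mem_image.mp he
            simp only [Set.Finite.mem_toFinset, Set.mem_inter_iff] at hy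
            rw [Set.Finite.mem_toFinset]
            exact ⟨hy.1, x, hS.mem_toFinset.mp hx, y, hy.2, rfl⟩
          calc ∑ x ∈ hS.toFinset, (Bi x).card
              = ∑ x ∈ hS.toFinset, (fE.toFinset.filter (· ∈ Bi x)).card := by
                refine Finset.sum_congr rfl (fun x hx => ?_)
                rw [Finset.filter_mem_eq_inter, Finset.inter_eq_right.mpr (hBiE x hx)]
            _ = ∑ x ∈ hS.toFinset, ∑ e ∈ fE.toFinset, (if e ∈ Bi x then 1 else 0) := by
                refine Finset.sum_congr rfl (fun x _ => ?_)
                rw [Finset.card_filter]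
            _ = ∑ e ∈ fE.toFinset, ∑ x ∈ hS.toFinset, (if e ∈ Bi x then 1 else 0) :=
                Finset.sum_comm
            _ = ∑ e ∈ fE.toFinset, (hS.toFinset.filter (fun x => e ∈ Bi x)).card := by
                refine Finset.sum_congr rfl (fun e _ => ?_)
                rw [Finset.card_filter]
            _ ≤ ∑ _e ∈ fE.toFinset, 2 := by
                refine Finset.sum_le_sum (fun e _ => ?_)
                induction e using Sym2.ind with
                | _ a b =>
                  refine le_trans (Finset.card_le_card (t := {a, b}) ?_) ?_
                  · intro x hx
                    obtain ⟨-, hmem⟩ := Finset.mem_filter.mp hx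
                    rw [hBi] at hmem
                    obtain ⟨y, -, hxy⟩ := Finset.mem_image.mp hmem
                    rw [Sym2.eq_iff] at hxy
                    rcases hxy with ⟨h1, -⟩ | ⟨h1, -⟩
                    · simp [h1]
                    · simp [h1]
                  · exact le_trans (Finset.card_insert_le _ _) (by simp)
            _ = 2 * (edgesBetween G S S).ncard := by
                rw [Finset.sum_const, smul_eq_mul, Set.ncard_eq_toFinset_card _ fE, mul_comm]
        · -- boundary edges: disjoint images
          have hBoE : ∀ x ∈ hS.toFinset, Bo x ⊆ fB.toFinset := by
            intro x hx e he
            rw [hBo] at he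
            obtain ⟨y, hy, rfl⟩ := Finset.mem_image.mp he
            simp only [Set.Finite.mem_toFinset, Set.mem_diff] at hy
            rw [Set.Finite.mem_toFinset]
            exact ⟨hy.1, x, hS.mem_toFinset.mp hx, y, hy.2, rfl⟩
          have hdisj : ∀ x ∈ hS.toFinset, ∀ x' ∈ hS.toFinset, x ≠ x' →
              Disjoint (Bo x) (Bo x') := by
            intro x hx x' hx' hne
            rw [Finset.disjoint_left]
            intro e he he'
            rw [hBo] at he he'
            obtain ⟨y, hy, rfl⟩ := Finset.mem_image.mp he
            obtain ⟨y', hy', h⟩ := Finset.mem_image.mp he'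
            simp only [Set.Finite.mem_toFinset, Set.mem_diff] at hy hy'
            rw [Sym2.eq_iff] at h
            rcases h with ⟨h1, -⟩ | ⟨-, h2⟩
            · exact hne h1.symm
            · exact hy'.2 (by rw [h2]; exact hS.mem_toFinset.mp hx)
          calc ∑ x ∈ hS.toFinset, (Bo x).card
              = (hS.toFinset.biUnion Bo).card := (Finset.card_biUnion hdisj).symm
            _ ≤ fB.toFinset.card := by
                refine Finset.card_le_card ?_
                intro e he
                obtain ⟨x, hx, hmem⟩ := Finset.mem_biUnion.mp he
                exact hBoE x hx hmem
            _ = (edgeBdry G S).ncard := (Set.ncard_eq_toFinset_card _ fB).symm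

open Classical in
lemma tree_internal_edges {T : SimpleGraph V} (htree : T.IsTree)
    (hloc : ∀ v : V, (T.neighborSet v).Finite) {S : Set V} (hS : S.Finite)
    (hne : S.Nonempty) :
    (edgesBetween T S S).ncard + 1 ≤ S.ncard := by
  obtain ⟨o, ho⟩ := hne
  have hEU := htree.existsUnique_path
  choose f hfp hfu using fun v => hEU v o
  -- parent edge of a vertex (towards the root o)
  set pe : V → Sym2 V := fun w => if h : (f w).Nil then s(w, w) else s(w, (f w).getVert 1)
    with hpe
  have claim : ∀ u v : V, T.Adj u v → pe u = s(u, v) ∨ pe v = s(u, v) := by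
    intro u v huv
    by_cases hmem : u ∈ (f v).support
    · right
      have hdrop : ((f v).dropUntil u hmem).IsPath := (hfp v).dropUntil hmem
      have hvnot : v ∉ ((f v).dropUntil u hmem).support := by
        have hnodup := (hfp v).support_nodup
        rw [← SimpleGraph.Walk.take_spec (f v) hmem, SimpleGraph.Walk.support_append] at hnodup
        have hdisj := List.disjoint_of_nodup_append hnodup
        have hvtake : v ∈ ((f v).takeUntil u hmem).support :=
          SimpleGraph.Walk.start_mem_support _
        have hvnt : v ∉ ((f v).dropUntil u hmem).support.tail := hdisj hvtake
        intro hcon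
        rw [SimpleGraph.Walk.support_eq_cons] at hcon
        rcases List.mem_cons.mp hcon with h | h
        · exact huv.ne' h
        · exact hvnt h
      have hWpath : (SimpleGraph.Walk.cons huv.symm ((f v).dropUntil u hmem)).IsPath :=
        (SimpleGraph.Walk.cons_isPath_iff _ _).mpr ⟨hdrop, hvnot⟩
      have hEq : SimpleGraph.Walk.cons huv.symm ((f v).dropUntil u hmem) = f v :=
        hfu v _ hWpath
      have hnn : ¬ (f v).Nil := by
        rw [← hEq]; exact SimpleGraph.Walk.not_nil_cons
      have hgv : (f v).getVert 1 = u := by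
        rw [← hEq]
        show ((f v).dropUntil u hmem).getVert 0 = u
        exact SimpleGraph.Walk.getVert_zero _
      rw [hpe]
      simp only [dif_neg hnn, hgv]
      exact Sym2.eq_swap
    · left
      have hWpath : (SimpleGraph.Walk.cons huv (f v)).IsPath :=
        (SimpleGraph.Walk.cons_isPath_iff _ _).mpr ⟨hfp v, hmem⟩
      have hEq : SimpleGraph.Walk.cons huv (f v) = f u := hfu u _ hWpath
      have hnn : ¬ (f u).Nil := by
        rw [← hEq]; exact SimpleGraph.Walk.not_nil_cons
      have hgv : (f u).getVert 1 = v := by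
        rw [← hEq]
        show (f v).getVert 0 = v
        exact SimpleGraph.Walk.getVert_zero _
      rw [hpe]
      simp only [dif_neg hnn, hgv]
  -- every internal edge is the parent edge of one of its endpoints, which is ≠ o
  have fE := edgesBetween_finite hloc hS S
  have hpe_ne_o : ∀ w : V, ∀ e ∈ T.edgeSet, pe w = e → w ≠ o := by
    intro w e heE hpew hwo
    subst hwo
    have hnil : (f w).Nil := by
      have : SimpleGraph.Walk.nil = f w := hfu w _ SimpleGraph.Walk.IsPath.nil
      rw [← this]; exact SimpleGraph.Walk.nil_nil
    rw [hpe] at hpew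
    simp only [dif_pos hnil] at hpew
    obtain ⟨a, b, hab, rfl⟩ := edgeSet_exists_rep heE
    rw [Sym2.eq_iff] at hpew
    rcases hpew with ⟨h1, h2⟩ | ⟨h1, h2⟩
    · exact hab.ne (h1.symm.trans h2)
    · exact hab.ne' (h1.symm.trans h2)
  have hsub : fE.toFinset ⊆ (hS.toFinset.erase o).image pe := by
    intro e he
    rw [Set.Finite.mem_toFinset] at he
    obtain ⟨heE, x, hx, y, hy, rfl⟩ := he
    have hadj : T.Adj x y := heE
    rcases claim x y hadj with hpex | hpey
    · exact Finset.mem_image.mpr ⟨x, Finset.mem_erase.mpr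
        ⟨hpe_ne_o x _ heE hpex, hS.mem_toFinset.mpr hx⟩, hpex⟩
    · exact Finset.mem_image.mpr ⟨y, Finset.mem_erase.mpr
        ⟨hpe_ne_o y _ heE hpey, hS.mem_toFinset.mpr hy⟩, hpey⟩
  have h1 : fE.toFinset.card ≤ (hS.toFinset.erase o).card :=
    le_trans (Finset.card_le_card hsub) Finset.card_image_le
  rw [Finset.card_erase_of_mem (hS.mem_toFinset.mpr ho)] at h1
  have h2 : 1 ≤ hS.toFinset.card := Finset.card_pos.mpr ⟨o, hS.mem_toFinset.mpr ho⟩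
  rw [Set.ncard_eq_toFinset_card _ fE, Set.ncard_eq_toFinset_card _ hS]
  omega


end AuxIso

/-- Let `q ∈ (0, 2]`, let `T` be an infinite tree in which every vertex has finite degree,
and let `S` be a nonempty finite vertex subset of `T` with `S ∩ A_q = ∅`. Then the
`q`-oceans `T ∖ A_q` satisfy the isoperimetric inequality
`(q + 2)·|∂^{T∖A_q} S| ≥ q·Σ_{x∈S} deg_T(x)`, where `∂^{T∖A_q} S` denotes the set of
edges of `T` joining a vertex of `S` to a vertex of `T ∖ (S ∪ A_q)`. -/
theorem stmt10 (T : SimpleGraph V) [Infinite V] (htree : T.IsTree)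
    (hloc : ∀ v : V, (T.neighborSet v).Finite)
    (q : ℝ) (hq0 : 0 < q) (hq2 : q ≤ 2) (S : Set V) (hSne : S.Nonempty)
    (hSfin : S.Finite) (hdisj : S ∩ coreUnion T q = ∅) :
    q * (∑ x ∈ hSfin.toFinset, ((T.neighborSet x).ncard : ℝ)) ≤
      (q + 2) *
        (({e : Sym2 V | e ∈ T.edgeSet ∧
            ∃ x ∈ S, ∃ y ∉ S ∪ coreUnion T q, e = s(x, y)}.ncard : ℝ)) := by
  classical
  set A := coreUnion T q with hA
  have hdisj' : ∀ x, x ∈ A → x ∉ S := by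
    intro x hxA hxS
    have : x ∈ S ∩ A := ⟨hxS, hxA⟩
    rw [hdisj] at this
    exact this
  set N : Set V := (⋃ x ∈ S, T.neighborSet x) ∩ A with hN
  have hNfin : N.Finite := (hSfin.biUnion (fun x _ => hloc x)).inter_of_left A
  have hcore : ∀ y : V, ∃ Xy : Set V, y ∈ N → (IsIsolatedCore T q Xy ∧ y ∈ Xy) := by
    intro y
    by_cases hy : y ∈ N
    · obtain ⟨X, hX, hyX⟩ := hy.2
      exact ⟨X, fun _ => ⟨hX, hyX⟩⟩
    · exact ⟨∅, fun h => absurd h hy⟩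
  choose X hX using hcore
  set U : Set V := ⋃ y ∈ hNfin.toFinset, X y with hU
  have hUfin : U.Finite := Set.Finite.biUnion hNfin.toFinset.finite_toSet
      (fun y hy => ((hX y (hNfin.mem_toFinset.mp hy)).1).1)
  set W : Set V := S ∪ U with hW
  have hWfin : W.Finite := hSfin.union hUfin
  obtain ⟨A0, hA0W, hA0core, hA0max⟩ := exists_core_maximizer (q := q) hloc hWfin
  set A1 : Set V := A0 ∪ U with hA1
  obtain ⟨hA1fin, hA1iso⟩ := isolation_le_union_cores (q := q) hloc hA0core.1 hNfin.toFinset X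
      (fun y hy => (hX y (hNfin.mem_toFinset.mp hy)).1)
  have hA1W : A1 ⊆ W := Set.union_subset (hA0W) Set.subset_union_right
  have hA1max : ∀ B, B ⊆ W → isolation T q B ≤ isolation T q A1 :=
    fun B hB => (hA0max B hB).trans hA1iso
  have hA1A : A1 ⊆ A := Set.union_subset (core_subset_coreUnion hA0core)
      (Set.iUnion₂_subset fun y hy =>
        core_subset_coreUnion (hX y (hNfin.mem_toFinset.mp hy)).1)
  have hA1S : ∀ x, x ∈ A1 → x ∉ S := fun x hx => hdisj' x (hA1A hx)
  have hNA1 : N ⊆ A1 := fun y hy => Set.mem_union_right _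
    (Set.mem_biUnion (hNfin.mem_toFinset.mpr hy) ((hX y hy).2))
  have hkey : isolation T q (A1 ∪ S) ≤ isolation T q A1 :=
    hA1max _ (Set.union_subset hA1W Set.subset_union_left)
  have hdisjA1S : Disjoint A1 S := Set.disjoint_left.mpr hA1S
  have hcard : (A1 ∪ S).ncard = A1.ncard + S.ncard := Set.ncard_union_eq hdisjA1S hA1fin hSfin
  have hbd := bdry_disjoint_union hloc hA1fin hSfin hA1S
  have hiso : q * (S.ncard : ℝ) + ((edgeBdry T A1).ncard : ℝ) ≤
      ((edgeBdry T (A1 ∪ S)).ncard : ℝ) := by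
    have h := hkey
    unfold isolation at h
    rw [hcard] at h
    push_cast at h
    linarith
  have hF4' : q * (S.ncard : ℝ) + 2 * ((edgesBetween T A1 S).ncard : ℝ) ≤
      ((edgeBdry T S).ncard : ℝ) := by
    have hbdc : ((edgeBdry T (A1 ∪ S)).ncard : ℝ) + 2 * ((edgesBetween T A1 S).ncard : ℝ) ≤
        ((edgeBdry T A1).ncard : ℝ) + ((edgeBdry T S).ncard : ℝ) := by exact_mod_cast hbd
    linarith
  have hbsub : edgesBetween T S A ⊆ edgesBetween T A1 S := by
    rintro e ⟨heE, x, hx, y, hy, rfl⟩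
    have hadj : T.Adj x y := heE
    exact ⟨heE, y, hNA1 ⟨Set.mem_biUnion hx hadj, hy⟩, x, hx, Sym2.eq_swap⟩
  have hble : (edgesBetween T S A).ncard ≤ (edgesBetween T A1 S).ncard :=
    Set.ncard_le_ncard hbsub (edgesBetween_finite hloc hA1fin S)
  have hF4 : q * (S.ncard : ℝ) + 2 * ((edgesBetween T S A).ncard : ℝ) ≤
      ((edgeBdry T S).ncard : ℝ) := by
    have hc : ((edgesBetween T S A).ncard : ℝ) ≤ ((edgesBetween T A1 S).ncard : ℝ) := by
      exact_mod_cast hble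
    linarith
  set D' : Set (Sym2 V) := {e : Sym2 V | e ∈ T.edgeSet ∧
      ∃ x ∈ S, ∃ y ∉ S ∪ A, e = s(x, y)} with hD'
  have hD'eq : D' = edgesBetween T S (S ∪ A)ᶜ := rfl
  have hD'fin : D'.Finite := by rw [hD'eq]; exact edgesBetween_finite hloc hSfin _
  have hF3 : (edgeBdry T S).ncard ≤ D'.ncard + (edgesBetween T S A).ncard := by
    refine le_trans (Set.ncard_le_ncard ?_
      (hD'fin.union (edgesBetween_finite hloc hSfin A))) (Set.ncard_union_le _ _)
    rintro e ⟨heE, x, hx, y, hy, rfl⟩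
    by_cases hyA : y ∈ A
    · exact Or.inr ⟨heE, x, hx, y, hyA, rfl⟩
    · exact Or.inl ⟨heE, x, hx, y, (fun hc => hc.elim hy hyA), rfl⟩
  have hF1 := sum_degree_le hloc hSfin
  have hF2 := tree_internal_edges htree hloc hSfin hSne
  have hF1R : (∑ x ∈ hSfin.toFinset, ((T.neighborSet x).ncard : ℝ)) ≤
      2 * ((edgesBetween T S S).ncard : ℝ) + ((edgeBdry T S).ncard : ℝ) := by
    have : ((∑ x ∈ hSfin.toFinset, (T.neighborSet x).ncard : ℕ) : ℝ) ≤
        2 * ((edgesBetween T S S).ncard : ℝ) + ((edgeBdry T S).ncard : ℝ) := by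
      exact_mod_cast hF1
    rw [Nat.cast_sum] at this
    exact this
  have hF2R : ((edgesBetween T S S).ncard : ℝ) + 1 ≤ (S.ncard : ℝ) := by exact_mod_cast hF2
  have hF3R : ((edgeBdry T S).ncard : ℝ) ≤ (D'.ncard : ℝ) + ((edgesBetween T S A).ncard : ℝ) := by
    exact_mod_cast hF3
  have hm1 := mul_le_mul_of_nonneg_left hF1R hq0.le
  have hm2 := mul_le_mul_of_nonneg_left hF2R hq0.le
  have hm3 := mul_le_mul_of_nonneg_left hF3R hq0.le
  have hm4 : q * ((edgesBetween T S A).ncard : ℝ) ≤ 2 * ((edgesBetween T S A).ncard : ℝ) :=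
    mul_le_mul_of_nonneg_right hq2 (Nat.cast_nonneg _)
  linarith [hF4, hm1, hm2, hm3, hm4, hq0]
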